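/- arXiv:1901.04008 — 3 statements merged into one kernel-verified Lean document; each statement's English description precedes it below -/
import Mathlib

section
/- Let G be a finite simple graph with vertex weights w and let δ be a nonnegative edge-weight function on G that is G-valid. Then for every vertex cover C of G, the total weight of the set S_δ of tight vertices satisfies Σ_{v ∈ S_δ} w(v) ≤ 2 · Σ_{v ∈ C} w(v). In particular, Σ_{v ∈ S_δ} w(v) is at most twice the minimum weight of a vertex cover of G. -/
lemma sum_sum_filter_eq {V : Type*} [Fintype V] [DecidableEq V]
    (G : SimpleGraph V) [DecidableRel G.Adj] (δ : Sym2 V → ℝ) (A : Finset V) :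
    ∑ v ∈ A, ∑ e ∈ G.edgeFinset.filter (fun e => v ∈ e), δ e
      = ∑ e ∈ G.edgeFinset, (A.filter (· ∈ e)).card * δ e := by
  simp only [Finset.sum_filter]
  rw [Finset.sum_comm]
  refine Finset.sum_congr rfl fun e _ => ?_
  rw [← Finset.sum_filter, Finset.sum_const, nsmul_eq_mul]

/-- If `δ` is a nonnegative `G`-valid edge-weight function, then the total
weight of the set `S` of tight vertices is at most twice the weight of any vertex cover. -/
theorem tight_vertices_weight_le_two_mul_cover_weight
    {V : Type*} [Fintype V] [DecidableEq V]
    (G : SimpleGraph V) [DecidableRel G.Adj]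
    (w : V → ℝ) (hw : ∀ v, 0 < w v)
    (δ : Sym2 V → ℝ) (hδ : ∀ e ∈ G.edgeFinset, 0 ≤ δ e)
    (hvalid : ∀ v, ∑ e ∈ G.edgeFinset.filter (fun e => v ∈ e), δ e ≤ w v)
    (S : Finset V)
    (hS : ∀ v, v ∈ S ↔ w v ≤ ∑ e ∈ G.edgeFinset.filter (fun e => v ∈ e), δ e)
    (C : Finset V) (hC : ∀ e ∈ G.edgeSet, ∃ v ∈ C, v ∈ e) :
    ∑ v ∈ S, w v ≤ 2 * ∑ v ∈ C, w v := by
  have h1 : ∑ v ∈ S, w v ≤ ∑ v ∈ S, ∑ e ∈ G.edgeFinset.filter (fun e => v ∈ e), δ e :=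
    Finset.sum_le_sum fun v hv => (hS v).1 hv
  have h2 : ∑ v ∈ S, ∑ e ∈ G.edgeFinset.filter (fun e => v ∈ e), δ e
      ≤ ∑ v : V, ∑ e ∈ G.edgeFinset.filter (fun e => v ∈ e), δ e := by
    refine Finset.sum_le_sum_of_subset_of_nonneg (Finset.subset_univ S) fun v _ _ => ?_
    exact Finset.sum_nonneg fun e he => hδ e (Finset.mem_of_mem_filter e he)
  have hcard2 : ∀ e ∈ G.edgeFinset, ((Finset.univ : Finset V).filter (· ∈ e)).card = 2 := by
    intro e he
    rw [SimpleGraph.mem_edgeFinset] at he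
    induction e with
    | h a b =>
      have hab : a ≠ b := G.ne_of_adj he
      have : (Finset.univ : Finset V).filter (· ∈ s(a, b)) = {a, b} := by
        ext x; simp [Sym2.mem_iff]
      rw [this, Finset.card_insert_of_notMem (by simp [hab]), Finset.card_singleton]
  have h3 : ∑ v : V, ∑ e ∈ G.edgeFinset.filter (fun e => v ∈ e), δ e
      = ∑ e ∈ G.edgeFinset, 2 * δ e := by
    rw [sum_sum_filter_eq]
    exact Finset.sum_congr rfl fun e he => by rw [hcard2 e he]; norm_num
  have h4 : ∑ e ∈ G.edgeFinset, δ e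
      ≤ ∑ v ∈ C, ∑ e ∈ G.edgeFinset.filter (fun e => v ∈ e), δ e := by
    rw [sum_sum_filter_eq]
    refine Finset.sum_le_sum fun e he => ?_
    have hδe := hδ e he
    have hpos : 1 ≤ ((C.filter (· ∈ e)).card : ℝ) := by
      obtain ⟨v, hv, hve⟩ := hC e (SimpleGraph.mem_edgeFinset.mp he)
      have : (C.filter (· ∈ e)).Nonempty := ⟨v, Finset.mem_filter.mpr ⟨hv, hve⟩⟩
      exact_mod_cast Finset.card_pos.mpr this
    nlinarith
  have h5 : ∑ v ∈ C, ∑ e ∈ G.edgeFinset.filter (fun e => v ∈ e), δ e ≤ ∑ v ∈ C, w v :=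
    Finset.sum_le_sum fun v _ => hvalid v
  calc ∑ v ∈ S, w v ≤ ∑ e ∈ G.edgeFinset, 2 * δ e := by
        rw [← h3]; exact h1.trans h2
    _ = 2 * ∑ e ∈ G.edgeFinset, δ e := by rw [Finset.mul_sum]
    _ ≤ 2 * ∑ v ∈ C, w v := by linarith [h4.trans h5]
end

section
/- Let G be a finite simple graph with vertex weights w and let δ be a nonnegative edge-weight function on G that is G-valid. If the set S_δ of tight vertices is a vertex cover of G, then S_δ is a 2-approximation of the minimum weight vertex cover: S_δ is a vertex cover and Σ_{v ∈ S_δ} w(v) ≤ 2 · Σ_{v ∈ C} w(v) for every vertex cover C of G. -/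
lemma sum_swap_delta {V : Type*} [Fintype V] [DecidableEq V]
    (T : Finset V) (E : Finset (Sym2 V)) (δ : Sym2 V → ℝ) :
    ∑ v ∈ T, ∑ e ∈ E.filter (fun e => v ∈ e), δ e
      = ∑ e ∈ E, ((T.filter (fun v => v ∈ e)).card : ℝ) * δ e := by
  simp_rw [Finset.sum_filter]
  rw [Finset.sum_comm]
  refine Finset.sum_congr rfl fun e _ => ?_
  rw [← Finset.sum_filter, Finset.sum_const, nsmul_eq_mul]

lemma filter_mem_card_le_two {V : Type*} [Fintype V] [DecidableEq V]
    (T : Finset V) (e : Sym2 V) : (T.filter (fun v => v ∈ e)).card ≤ 2 := by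
  induction e using Sym2.ind with
  | _ a b =>
    have hsub : T.filter (fun v => v ∈ s(a, b)) ⊆ {a, b} := by
      intro v hv
      simp only [Finset.mem_filter, Sym2.mem_iff] at hv
      simp [hv.2]
    calc (T.filter (fun v => v ∈ s(a, b))).card ≤ ({a, b} : Finset V).card :=
          Finset.card_le_card hsub
      _ ≤ 2 := Finset.card_insert_le _ _ |>.trans (by simp)

/-- If `δ` is a nonnegative `G`-valid edge-weight function and the set `S` of
tight vertices is a vertex cover, then `S` is a 2-approximation of the minimum weight
vertex cover. -/
theorem tight_vertices_two_approx_mwvc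
    {V : Type*} [Fintype V] [DecidableEq V]
    (G : SimpleGraph V) [DecidableRel G.Adj]
    (w : V → ℝ) (hw : ∀ v, 0 < w v)
    (δ : Sym2 V → ℝ) (hδ : ∀ e ∈ G.edgeFinset, 0 ≤ δ e)
    (hvalid : ∀ v, ∑ e ∈ G.edgeFinset.filter (fun e => v ∈ e), δ e ≤ w v)
    (S : Finset V)
    (hS : ∀ v, v ∈ S ↔ w v ≤ ∑ e ∈ G.edgeFinset.filter (fun e => v ∈ e), δ e)
    (hcover : ∀ e ∈ G.edgeSet, ∃ v ∈ S, v ∈ e) :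
    (∀ e ∈ G.edgeSet, ∃ v ∈ S, v ∈ e) ∧
      ∀ C : Finset V, (∀ e ∈ G.edgeSet, ∃ v ∈ C, v ∈ e) →
        ∑ v ∈ S, w v ≤ 2 * ∑ v ∈ C, w v := by
  refine ⟨hcover, fun C hC => ?_⟩
  have h1 : ∑ v ∈ S, w v ≤ ∑ e ∈ G.edgeFinset, 2 * δ e := by
    calc ∑ v ∈ S, w v
        ≤ ∑ v ∈ S, ∑ e ∈ G.edgeFinset.filter (fun e => v ∈ e), δ e :=
          Finset.sum_le_sum fun v hv => (hS v).mp hv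
      _ = ∑ e ∈ G.edgeFinset, ((S.filter (fun v => v ∈ e)).card : ℝ) * δ e :=
          sum_swap_delta S G.edgeFinset δ
      _ ≤ ∑ e ∈ G.edgeFinset, 2 * δ e := by
          refine Finset.sum_le_sum fun e he => ?_
          exact mul_le_mul_of_nonneg_right
            (by exact_mod_cast filter_mem_card_le_two S e) (hδ e he)
  have h2 : ∑ e ∈ G.edgeFinset, δ e ≤ ∑ v ∈ C, w v := by
    calc ∑ e ∈ G.edgeFinset, δ e
        ≤ ∑ e ∈ G.edgeFinset, ((C.filter (fun v => v ∈ e)).card : ℝ) * δ e := by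
          refine Finset.sum_le_sum fun e he => ?_
          have hne : (C.filter (fun v => v ∈ e)).Nonempty := by
            obtain ⟨v, hvC, hve⟩ := hC e (SimpleGraph.mem_edgeFinset.mp he)
            exact ⟨v, Finset.mem_filter.mpr ⟨hvC, hve⟩⟩
          have : (1 : ℝ) ≤ ((C.filter (fun v => v ∈ e)).card : ℝ) := by
            exact_mod_cast Finset.card_pos.mpr hne
          nlinarith [hδ e he]
      _ = ∑ v ∈ C, ∑ e ∈ G.edgeFinset.filter (fun e => v ∈ e), δ e :=
          (sum_swap_delta C G.edgeFinset δ).symm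
      _ ≤ ∑ v ∈ C, w v := Finset.sum_le_sum fun v _ => hvalid v
  calc ∑ v ∈ S, w v ≤ ∑ e ∈ G.edgeFinset, 2 * δ e := h1
    _ = 2 * ∑ e ∈ G.edgeFinset, δ e := by rw [Finset.mul_sum]
    _ ≤ 2 * ∑ v ∈ C, w v := by linarith
end

section
/- Fix positive integers γ and n and let h(i) = i mod 3γn. For all natural numbers i < i' with i' − i ≤ γn, it holds that h(i) ≺_h h(i'). That is, the hash h preserves the natural order of round numbers whose difference is at most γn. -/
/-- The order `≺_h` on hashed timestamp values in `{0, …, 3γn − 1}`. -/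
def PrecH (γ n a b : ℕ) : Prop :=
  (a < b ∧ b ≤ 2 * γ * n) ∨
    (γ * n ≤ a ∧ a < b ∧ b ≤ 3 * γ * n) ∨
    (2 * γ * n ≤ a ∧ a < 3 * γ * n ∧ b < γ * n)

/-- The hash `h(i) = i mod 3γn` preserves the order of round numbers whose
difference is at most `γn`. -/
theorem hash_preserves_order
    (γ n : ℕ) (hγ : 0 < γ) (hn : 0 < n)
    (i i' : ℕ) (hlt : i < i') (hdiff : i' - i ≤ γ * n) :
    PrecH γ n (i % (3 * γ * n)) (i' % (3 * γ * n)) := by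
  have hg : 0 < γ * n := Nat.mul_pos hγ hn
  simp only [PrecH, Nat.mul_assoc]
  generalize hG : γ * n = g at *
  set N := 3 * g with hN
  set d := i' - i with hd
  have hdpos : 0 < d := by omega
  have hi' : i' = i + d := by omega
  have haN : i % N < N := Nat.mod_lt _ (by omega)
  have hb : i' % N = (i % N + d) % N := by
    rw [hi', Nat.add_mod, Nat.mod_eq_of_lt (a := d) (by omega)]
  by_cases hcase : i % N + d < N
  · have hb2 : i' % N = i % N + d := by rw [hb, Nat.mod_eq_of_lt hcase]
    omega
  · have hlt2 : i % N + d - N < N := by omega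
    have hb2 : i' % N = i % N + d - N := by
      rw [hb, Nat.mod_eq_sub_mod (by omega), Nat.mod_eq_of_lt hlt2]
    omega
end
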